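/- For n ≥ 3, the fault diameter of Q_n is n+1: removing any set of at most n−1 vertices from Q_n leaves a connected graph of diameter at most n+1, and there is a set of exactly n−1 vertices whose removal yields a connected graph of diameter exactly n+1. -/

import Mathlib

open SimpleGraph

/-- The `n`-dimensional hypercube: vertices are `Fin n → Bool`,
adjacent iff Hamming distance is `1`. -/
def Q (n : ℕ) : SimpleGraph (Fin n → Bool) where
  Adj u v := hammingDist u v = 1
  symm := ⟨fun u v (h : hammingDist u v = 1) => by rwa [hammingDist_comm]⟩
  loopless := ⟨fun u (h : hammingDist u u = 1) => by simp [hammingDist_self] at h⟩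

/-- Flip the `i`-th bit of `x`. -/
def flipBit {n : ℕ} (x : Fin n → Bool) (i : Fin n) : Fin n → Bool :=
  Function.update x i (!x i)

/-- `S` is a subcube of dimension exactly `m` (fixing `n - m` coordinates). -/
def IsSubcube {n : ℕ} (m : ℕ) (S : Set (Fin n → Bool)) : Prop :=
  ∃ A : Finset (Fin n), A.card = n - m ∧ ∃ p : Fin n → Bool,
    S = {x | ∀ i ∈ A, x i = p i}

/-- `S` is a subcube of dimension at most `m` (fixing at least `n - m` coordinates). -/
def IsSubcubeLe {n : ℕ} (m : ℕ) (S : Set (Fin n → Bool)) : Prop :=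
  ∃ A : Finset (Fin n), n - m ≤ A.card ∧ ∃ p : Fin n → Bool,
    S = {x | ∀ i ∈ A, x i = p i}

namespace FD

/-! ### Generic list lemmas -/

lemma mem_take_iff {α : Type*} (l : List α) (j : α) (m : ℕ) (hm : m ≤ l.length) :
    j ∈ l.take m ↔ ∃ jj, ∃ _ : jj < m, l[jj]'(by omega) = j := by
  rw [List.mem_iff_getElem]
  have hlen : (l.take m).length = m := by simp; omega
  constructor
  · rintro ⟨jj, h1, h2⟩
    exact ⟨jj, by omega, by rw [List.getElem_take] at h2; exact h2⟩
  · rintro ⟨jj, h1, h2⟩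
    exact ⟨jj, by omega, by rw [List.getElem_take]; exact h2⟩

lemma mod_index {d k idx jj : ℕ} (hk : k < d) (hidx : idx < d) (hjj : jj < d) :
    (jj + k) % d = idx ↔ jj = (idx + (d - k)) % d := by
  constructor
  · rintro rfl
    rw [Nat.mod_add_mod, show jj + k + (d - k) = jj + d by omega, Nat.add_mod_right,
      Nat.mod_eq_of_lt hjj]
  · rintro rfl
    rw [Nat.mod_add_mod, show idx + (d - k) + k = idx + d by omega, Nat.add_mod_right,
      Nat.mod_eq_of_lt hidx]

lemma mem_arc {α : Type*} {L : List α} (hL : L.Nodup) {d : ℕ} (hd : L.length = d)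
    {k m idx : ℕ} (hk : k < d) (hm : m ≤ d) (hidx : idx < d) :
    L[idx]'(by omega) ∈ (L.rotate k).take m ↔ (idx + (d - k)) % d < m := by
  rw [mem_take_iff _ _ _ (by simp [hd]; omega)]
  constructor
  · rintro ⟨jj, hjj, h2⟩
    rw [List.getElem_rotate] at h2
    have := (List.Nodup.getElem_inj_iff hL).mp h2
    rw [hd] at this
    rw [← (mod_index hk hidx (by omega)).mp this]
    exact hjj
  · intro h
    refine ⟨(idx + (d - k)) % d, h, ?_⟩
    rw [List.getElem_rotate]
    congr 1
    rw [hd]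
    exact (mod_index hk hidx (Nat.mod_lt _ (by omega))).mpr rfl

lemma arc_arc {α : Type*} {L : List α} (hL : L.Nodup) {d : ℕ} (hd : L.length = d)
    {k k' m m' : ℕ} (hk : k < d) (hk' : k' < d) (hkk : k ≠ k')
    (hm1 : 1 ≤ m) (hm : m ≤ d - 1) (hm1' : 1 ≤ m') (hm' : m' ≤ d - 1)
    (hiff : ∀ j : α, j ∈ (L.rotate k).take m ↔ j ∈ (L.rotate k').take m') : False := by
  have hd1 : 1 ≤ d := by omega
  have h1' : L[k']'(by omega) ∈ (L.rotate k').take m' := by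
    rw [mem_arc hL hd hk' (by omega) hk']
    rw [show k' + (d - k') = d by omega, Nat.mod_self]
    omega
  have h1 : (k' + (d - k)) % d < m := by
    rw [← mem_arc hL hd hk (by omega) hk']
    exact (hiff _).mpr h1'
  set a := (k' + (d - k)) % d with ha
  have ha1 : 1 ≤ a := by
    rcases Nat.eq_zero_or_pos a with h0 | h
    · exfalso
      rw [ha] at h0
      set t := k' + (d - k) with ht
      rcases Nat.lt_or_ge t d with hlt | hge
      · rw [Nat.mod_eq_of_lt hlt] at h0; omega
      · have h2 : t % d = t - d := by
          rw [Nat.mod_eq_sub_mod hge, Nat.mod_eq_of_lt (by omega)]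
        omega
    · exact h
  have hidx2 : (k' + (d - 1)) % d < d := Nat.mod_lt _ (by omega)
  have h2' : L[(k' + (d - 1)) % d]'(by omega) ∉ (L.rotate k').take m' := by
    rw [mem_arc hL hd hk' (by omega) hidx2]
    rw [Nat.mod_add_mod, show k' + (d - 1) + (d - k') = (d - 1) + d by omega,
      Nat.add_mod_right, Nat.mod_eq_of_lt (by omega)]
    omega
  have h2 : L[(k' + (d - 1)) % d]'(by omega) ∉ (L.rotate k).take m := by
    intro hmem
    exact h2' ((hiff _).mp hmem)
  rw [mem_arc hL hd hk (by omega) hidx2] at h2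
  rw [Nat.mod_add_mod, show k' + (d - 1) + (d - k) = (k' + (d - k)) + (d - 1) by omega,
    ← Nat.mod_add_mod, ← ha, show a + (d - 1) = d + (a - 1) by omega,
    Nat.add_mod_left, Nat.mod_eq_of_lt (by omega)] at h2
  omega

/-! ### Flip sequences -/

variable {n : ℕ}

def flips (x : Fin n → Bool) (c : List (Fin n)) : Fin n → Bool :=
  c.foldl flipBit x

@[simp] lemma flips_nil (x : Fin n → Bool) : flips x [] = x := rfl
@[simp] lemma flips_cons (x : Fin n → Bool) (a : Fin n) (c : List (Fin n)) :
    flips x (a :: c) = flips (flipBit x a) c := rfl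

lemma flips_append (x : Fin n → Bool) (c1 c2 : List (Fin n)) :
    flips x (c1 ++ c2) = flips (flips x c1) c2 := by
  simp [flips, List.foldl_append]

lemma flipBit_apply (x : Fin n → Bool) (i j : Fin n) :
    flipBit x i j = if j = i then !x i else x j := by
  simp [flipBit, Function.update_apply]

lemma flipBit_comm (x : Fin n → Bool) (i a : Fin n) :
    flipBit (flipBit x i) a = flipBit (flipBit x a) i := by
  rcases eq_or_ne i a with rfl | h
  · rfl
  · funext j
    simp only [flipBit_apply]
    rcases eq_or_ne j i with rfl | hj <;> rcases eq_or_ne j a with rfl | hj2 <;>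
      simp_all

@[simp] lemma flipBit_flipBit (x : Fin n → Bool) (i : Fin n) :
    flipBit (flipBit x i) i = x := by
  funext j
  simp only [flipBit_apply]
  rcases eq_or_ne j i with rfl | hj <;> simp_all

lemma flips_flipBit (x : Fin n → Bool) (i : Fin n) (c : List (Fin n)) :
    flips (flipBit x i) c = flipBit (flips x c) i := by
  induction c generalizing x with
  | nil => rfl
  | cons a c ih =>
    rw [flips_cons, flipBit_comm, ih (flipBit x a), flips_cons]

lemma flips_perm {c c' : List (Fin n)} (h : c.Perm c') (x : Fin n → Bool) :
    flips x c = flips x c' := by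
  induction h generalizing x with
  | nil => rfl
  | cons a _ ih => simp [ih]
  | swap a b l => simp [flipBit_comm]
  | trans _ _ ih1 ih2 => rw [ih1, ih2]

lemma flips_apply_nodup (x : Fin n → Bool) {c : List (Fin n)} (hc : c.Nodup) (j : Fin n) :
    flips x c j = if j ∈ c then !x j else x j := by
  induction c generalizing x with
  | nil => simp
  | cons a c ih =>
    simp only [List.nodup_cons] at hc
    rw [flips_cons, ih _ hc.2]
    rcases eq_or_ne j a with rfl | hj
    · simp [hc.1, flipBit_apply]
    · simp [flipBit_apply, hj]

lemma flips_mem_iff (x : Fin n → Bool) {c : List (Fin n)} (hc : c.Nodup) (j : Fin n) :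
    flips x c j ≠ x j ↔ j ∈ c := by
  rw [flips_apply_nodup x hc]
  by_cases h : j ∈ c <;> simp [h]

/-! ### Adjacency lemmas -/

lemma Q_adj_flipBit (x : Fin n → Bool) (i : Fin n) : (Q n).Adj x (flipBit x i) := by
  show hammingDist x (flipBit x i) = 1
  rw [hammingDist, show (1:ℕ) = ({i} : Finset (Fin n)).card from rfl]
  congr 1
  ext j
  simp only [Finset.mem_filter, Finset.mem_univ, true_and, Finset.mem_singleton,
    flipBit_apply]
  rcases eq_or_ne j i with rfl | hj <;> simp_all

lemma exists_flipBit_of_adj {x y : Fin n → Bool} (h : (Q n).Adj x y) :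
    ∃ i, y = flipBit x i := by
  have h1 : ({j | x j ≠ y j} : Finset (Fin n)).card = 1 := h
  obtain ⟨i0, hi⟩ := Finset.card_eq_one.mp h1
  have hmem : ∀ j : Fin n, x j ≠ y j ↔ j = i0 := by
    intro j
    constructor
    · intro hj
      have : j ∈ ({j | x j ≠ y j} : Finset (Fin n)) := by simpa using hj
      rwa [hi, Finset.mem_singleton] at this
    · intro hj hcon
      have h2 : j ∈ Finset.filter (fun k => x k ≠ y k) Finset.univ := by
        rw [hi, Finset.mem_singleton]; exact hj
      simp only [Finset.mem_filter] at h2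
      exact h2.2 hcon
  refine ⟨i0, funext fun j => ?_⟩
  rw [flipBit_apply]
  rcases eq_or_ne j i0 with rfl | hj
  · have := (hmem j).mpr rfl
    simp only [if_pos rfl]
    revert this
    cases x j <;> cases y j <;> simp
  · have hx : ¬ (x j ≠ y j) := fun hc => hj ((hmem j).mp hc)
    rw [if_neg hj]
    exact (not_not.mp hx).symm

lemma hammingDist_le_walk_length (S : Set (Fin n → Bool)) :
    ∀ {a b : ↥(Sᶜ)} (w : ((Q n).induce Sᶜ).Walk a b), hammingDist a.1 b.1 ≤ w.length := by
  intro a b w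
  induction w with
  | nil => simp [hammingDist_self]
  | @cons u v x h p ih =>
    have hadj : hammingDist u.1 v.1 = 1 := h
    calc hammingDist u.1 x.1 ≤ hammingDist u.1 v.1 + hammingDist v.1 x.1 :=
          hammingDist_triangle _ _ _
      _ ≤ 1 + p.length := by rw [hadj]; omega
      _ = (SimpleGraph.Walk.cons h p).length := by simp [SimpleGraph.Walk.length_cons]; omega

lemma induce_adj {S : Set (Fin n → Bool)} (a b : ↥(Sᶜ)) (h : (Q n).Adj a.1 b.1) :
    ((Q n).induce Sᶜ).Adj a b := by
  exact h

lemma walk_of_flips (S : Set (Fin n → Bool)) :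
    ∀ (c : List (Fin n)) (x : Fin n → Bool) (hx : x ∉ S)
      (_ : ∀ m, flips x (c.take m) ∉ S) (y : Fin n → Bool) (hy : y ∉ S)
      (_ : flips x c = y),
      ∃ w : ((Q n).induce Sᶜ).Walk ⟨x, hx⟩ ⟨y, hy⟩, w.length = c.length := by
  intro c
  induction c with
  | nil =>
    intro x hx h y hy hc
    simp only [flips_nil] at hc
    subst hc
    exact ⟨SimpleGraph.Walk.nil, rfl⟩
  | cons a c ih =>
    intro x hx h y hy hc
    have hx' : flipBit x a ∉ S := by
      have := h 1
      simpa using this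
    have h' : ∀ m, flips (flipBit x a) (c.take m) ∉ S := by
      intro m
      have := h (m + 1)
      simpa using this
    have hc' : flips (flipBit x a) c = y := hc
    obtain ⟨w, hw⟩ := ih (flipBit x a) hx' h' y hy hc'
    refine ⟨SimpleGraph.Walk.cons (induce_adj ⟨x, hx⟩ ⟨flipBit x a, hx'⟩ (Q_adj_flipBit x a)) w, ?_⟩
    simp [hw]

/-! ### The system of `n` fault-avoiding paths -/

noncomputable def Dlist (x y : Fin n → Bool) : List (Fin n) :=
  (Finset.filter (fun j => x j ≠ y j) Finset.univ).toList

noncomputable def pathL (x y : Fin n → Bool) (i : Fin n) : List (Fin n) :=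
  if i ∈ Dlist x y then (Dlist x y).rotate ((Dlist x y).idxOf i)
  else i :: (Dlist x y ++ [i])

lemma Dlist_nodup (x y : Fin n → Bool) : (Dlist x y).Nodup :=
  Finset.nodup_toList _

lemma mem_Dlist (x y : Fin n → Bool) (j : Fin n) : j ∈ Dlist x y ↔ x j ≠ y j := by
  simp [Dlist, Finset.mem_toList]

lemma flips_Dlist (x y : Fin n → Bool) : flips x (Dlist x y) = y := by
  funext j
  rw [flips_apply_nodup x (Dlist_nodup x y)]
  by_cases h : j ∈ Dlist x y
  · rw [if_pos h]
    have h2 := (mem_Dlist x y j).mp h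
    revert h2
    cases x j <;> cases y j <;> simp
  · rw [if_neg h]
    have h2 : ¬ (x j ≠ y j) := fun hc => h ((mem_Dlist x y j).mpr hc)
    exact not_not.mp h2

lemma Dlist_length_le (x y : Fin n → Bool) : (Dlist x y).length ≤ n := by
  rw [Dlist, Finset.length_toList]
  calc (Finset.filter (fun j => x j ≠ y j) Finset.univ).card
      ≤ (Finset.univ : Finset (Fin n)).card := Finset.card_filter_le _ _
    _ = n := by simp

lemma Dlist_length_lt (x y : Fin n → Bool) {i : Fin n} (hi : i ∉ Dlist x y) :
    (Dlist x y).length < n := by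
  rw [Dlist, Finset.length_toList]
  rw [Dlist] at hi
  calc (Finset.filter (fun j => x j ≠ y j) Finset.univ).card
      ≤ ((Finset.univ : Finset (Fin n)).erase i).card := by
        apply Finset.card_le_card
        intro j hj
        rw [Finset.mem_erase]
        refine ⟨?_, Finset.mem_univ j⟩
        rintro rfl
        exact hi (by rwa [Finset.mem_toList])
    _ < n := by
        rw [Finset.card_erase_of_mem (Finset.mem_univ i)]
        simp only [Finset.card_univ, Fintype.card_fin]
        have : 0 < n := i.pos
        omega

lemma flips_pathL (x y : Fin n → Bool) (i : Fin n) : flips x (pathL x y i) = y := by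
  rw [pathL]
  split_ifs with h
  · rw [flips_perm (List.rotate_perm _ _) x, flips_Dlist]
  · rw [flips_cons, flips_append,
      show flips (flips (flipBit x i) (Dlist x y)) [i]
        = flipBit (flips (flipBit x i) (Dlist x y)) i from rfl,
      flips_flipBit, flipBit_flipBit, flips_Dlist]

lemma pathL_length_mem (x y : Fin n → Bool) {i : Fin n} (h : i ∈ Dlist x y) :
    (pathL x y i).length = (Dlist x y).length := by
  rw [pathL, if_pos h, List.length_rotate]

lemma pathL_length_not_mem (x y : Fin n → Bool) {i : Fin n} (h : i ∉ Dlist x y) :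
    (pathL x y i).length = (Dlist x y).length + 2 := by
  rw [pathL, if_neg h]
  simp

lemma pathL_take_not_mem (x y : Fin n → Bool) {i : Fin n} (h : i ∉ Dlist x y)
    {m : ℕ} (hm1 : 1 ≤ m) (hm : m ≤ (Dlist x y).length + 1) :
    (pathL x y i).take m = i :: (Dlist x y).take (m - 1) := by
  rw [pathL, if_neg h, show m = (m - 1) + 1 by omega, List.take_succ_cons,
    List.take_append_of_le_length (by omega)]
  simp

lemma pathL_take_nodup (x y : Fin n → Bool) (i : Fin n)
    {m : ℕ} (hm1 : 1 ≤ m) (hm : m < (pathL x y i).length) :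
    ((pathL x y i).take m).Nodup := by
  by_cases h : i ∈ Dlist x y
  · apply List.Nodup.sublist (List.take_sublist _ _)
    rw [pathL, if_pos h]
    exact (List.nodup_rotate).mpr (Dlist_nodup x y)
  · rw [pathL_take_not_mem x y h hm1 (by rw [pathL_length_not_mem x y h] at hm; omega)]
    refine List.nodup_cons.mpr ⟨?_, List.Nodup.sublist (List.take_sublist _ _) (Dlist_nodup x y)⟩
    intro hcon
    exact h (List.mem_of_mem_take hcon)

lemma mem_pathL_take_mem (x y : Fin n → Bool) {i : Fin n} (h : i ∈ Dlist x y)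
    {m : ℕ} {j : Fin n} (hj : j ∈ (pathL x y i).take m) : j ∈ Dlist x y := by
  rw [pathL, if_pos h] at hj
  have := List.mem_of_mem_take hj
  exact (List.rotate_perm _ _).mem_iff.mp this

/-- the crucial disjointness property of internal vertices of the `n` paths -/
lemma cross (x y : Fin n → Bool) {i i' : Fin n} (hne : i ≠ i') {m m' : ℕ}
    (hm1 : 1 ≤ m) (hm : m < (pathL x y i).length)
    (hm1' : 1 ≤ m') (hm' : m' < (pathL x y i').length) :
    flips x ((pathL x y i).take m) ≠ flips x ((pathL x y i').take m') := by
  intro heq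
  have hL : (Dlist x y).Nodup := Dlist_nodup x y
  have hiff : ∀ j, j ∈ (pathL x y i).take m ↔ j ∈ (pathL x y i').take m' := by
    intro j
    rw [← flips_mem_iff x (pathL_take_nodup x y i hm1 hm) j,
      ← flips_mem_iff x (pathL_take_nodup x y i' hm1' hm') j, heq]
  by_cases hi : i ∈ Dlist x y <;> by_cases hi' : i' ∈ Dlist x y
  · -- both in D : two distinct arcs
    have hmd : m < (Dlist x y).length := by rwa [pathL_length_mem x y hi] at hm
    have hmd' : m' < (Dlist x y).length := by rwa [pathL_length_mem x y hi'] at hm'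
    have hk : (Dlist x y).idxOf i < (Dlist x y).length := List.idxOf_lt_length_iff.mpr hi
    have hk' : (Dlist x y).idxOf i' < (Dlist x y).length := List.idxOf_lt_length_iff.mpr hi'
    have hkk : (Dlist x y).idxOf i ≠ (Dlist x y).idxOf i' := by
      intro hcon
      apply hne
      have e1 : (Dlist x y)[(Dlist x y).idxOf i] = i := List.getElem_idxOf hk
      have e2 : (Dlist x y)[(Dlist x y).idxOf i'] = i' := List.getElem_idxOf hk'
      rw [← e1, ← e2]
      congr 1
    refine arc_arc hL rfl hk hk' hkk hm1 (by omega) hm1' (by omega) ?_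
    intro j
    have := hiff j
    rwa [pathL, if_pos hi, pathL, if_pos hi'] at this
  · -- i ∈ D, i' ∉ D : evaluate at i'
    have hmd' : m' ≤ (Dlist x y).length + 1 := by
      rw [pathL_length_not_mem x y hi'] at hm'; omega
    have h2 : i' ∈ (pathL x y i').take m' := by
      rw [pathL_take_not_mem x y hi' hm1' hmd']
      exact List.mem_cons_self
    have h1 : i' ∈ (pathL x y i).take m := (hiff i').mpr h2
    exact hi' (mem_pathL_take_mem x y hi h1)
  · -- i ∉ D, i' ∈ D : evaluate at i
    have hmd : m ≤ (Dlist x y).length + 1 := by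
      rw [pathL_length_not_mem x y hi] at hm; omega
    have h2 : i ∈ (pathL x y i).take m := by
      rw [pathL_take_not_mem x y hi hm1 hmd]
      exact List.mem_cons_self
    have h1 : i ∈ (pathL x y i').take m' := (hiff i).mp h2
    exact hi (mem_pathL_take_mem x y hi' h1)
  · -- both outside D : evaluate at i
    have hmd : m ≤ (Dlist x y).length + 1 := by
      rw [pathL_length_not_mem x y hi] at hm; omega
    have hmd' : m' ≤ (Dlist x y).length + 1 := by
      rw [pathL_length_not_mem x y hi'] at hm'; omega
    have h2 : i ∈ (pathL x y i).take m := by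
      rw [pathL_take_not_mem x y hi hm1 hmd]
      exact List.mem_cons_self
    have h1 : i ∈ (pathL x y i').take m' := (hiff i).mp h2
    rw [pathL_take_not_mem x y hi' hm1' hmd'] at h1
    rcases List.mem_cons.mp h1 with hcon | hcon
    · exact hne hcon
    · exact hi (List.mem_of_mem_take hcon)

/-- Key lemma: a short fault-avoiding walk exists. -/
lemma key (S : Set (Fin n → Bool)) (hS : S.ncard < n) (x y : Fin n → Bool)
    (hx : x ∉ S) (hy : y ∉ S) :
    ∃ w : ((Q n).induce Sᶜ).Walk ⟨x, hx⟩ ⟨y, hy⟩, w.length ≤ n + 1 := by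
  have hgood : ∃ i : Fin n, ∀ m, 0 < m → m < (pathL x y i).length →
      flips x ((pathL x y i).take m) ∉ S := by
    by_contra hcon
    push_neg at hcon
    choose f hf1 hf2 hf3 using hcon
    have hinj : Function.Injective
        (fun i => (⟨flips x ((pathL x y i).take (f i)), hf3 i⟩ : ↥S)) := by
      intro i i' hii
      by_contra hne
      exact cross x y hne (hf1 i) (hf2 i) (hf1 i') (hf2 i')
        (congrArg Subtype.val hii)
    have hle := Nat.card_le_card_of_injective _ hinj
    rw [Nat.card_eq_fintype_card, Fintype.card_fin, Nat.card_coe_set_eq] at hle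
    omega
  obtain ⟨i, hi⟩ := hgood
  have hlen : (pathL x y i).length ≤ n + 1 := by
    by_cases h : i ∈ Dlist x y
    · rw [pathL_length_mem x y h]
      have := Dlist_length_le x y
      omega
    · rw [pathL_length_not_mem x y h]
      have := Dlist_length_lt x y h
      omega
  have hpre : ∀ m, flips x ((pathL x y i).take m) ∉ S := by
    intro m
    rcases Nat.eq_zero_or_pos m with rfl | hm0
    · simpa using hx
    rcases Nat.lt_or_ge m (pathL x y i).length with hlt | hge
    · exact hi m hm0 hlt
    · rw [List.take_of_length_le hge, flips_pathL]
      exact hy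
  obtain ⟨w, hw⟩ := walk_of_flips S (pathL x y i) x hx hpre y hy (flips_pathL x y i)
  exact ⟨w, by omega⟩

end FD

theorem fault_diameter_hypercube (n : ℕ) (hn : 3 ≤ n) :
    (∀ S : Set (Fin n → Bool), S.ncard ≤ n - 1 →
      ((Q n).induce Sᶜ).Connected ∧
      ∀ x y, ((Q n).induce Sᶜ).dist x y ≤ n + 1) ∧
    ∃ S : Set (Fin n → Bool), S.ncard = n - 1 ∧
      ((Q n).induce Sᶜ).Connected ∧
      (∀ x y, ((Q n).induce Sᶜ).dist x y ≤ n + 1) ∧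
      ∃ x y, ((Q n).induce Sᶜ).dist x y = n + 1 := by
  have hmain : ∀ S : Set (Fin n → Bool), S.ncard ≤ n - 1 →
      ((Q n).induce Sᶜ).Connected ∧
      ∀ x y, ((Q n).induce Sᶜ).dist x y ≤ n + 1 := by
    intro S hS
    have hS' : S.ncard < n := by omega
    have hconn : ((Q n).induce Sᶜ).Connected := by
      rw [SimpleGraph.connected_iff]
      constructor
      · intro a b
        obtain ⟨w, _⟩ := FD.key S hS' a.1 b.1 a.2 b.2
        exact ⟨w⟩
      · -- nonempty
        rcases Set.eq_empty_or_nonempty Sᶜ with h | h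
        · exfalso
          have hSu : S = Set.univ := Set.compl_empty_iff.mp h
          rw [hSu, Set.ncard_univ, Nat.card_eq_fintype_card] at hS'
          have h2 : n < 2 ^ n := Nat.lt_two_pow_self (n := n)
          simp only [Fintype.card_fun, Fintype.card_bool, Fintype.card_fin] at hS'
          omega
        · exact h.to_subtype
    refine ⟨hconn, fun a b => ?_⟩
    obtain ⟨w, hw⟩ := FD.key S hS' a.1 b.1 a.2 b.2
    calc ((Q n).induce Sᶜ).dist a b ≤ w.length := SimpleGraph.dist_le w
      _ ≤ n + 1 := hw
  refine ⟨hmain, ?_⟩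
  -- construction of the extremal fault set
  have hn0 : 0 < n := by omega
  set j0 : Fin n := ⟨n - 1, by omega⟩ with hj0
  set x0 : Fin n → Bool := fun _ => false with hx0
  set y0 : Fin n → Bool := fun i => decide (i ≠ j0) with hy0
  set S : Set (Fin n → Bool) := (fun i => flipBit x0 i) '' {i : Fin n | i ≠ j0} with hSdef
  have hflip_apply : ∀ (i j : Fin n), flipBit x0 i j = decide (j = i) := by
    intro i j
    rw [FD.flipBit_apply]
    rcases eq_or_ne j i with rfl | h <;> simp_all
  have hflip_inj : Function.Injective (fun i => flipBit x0 i) := by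
    intro i j hij
    have this : flipBit x0 i i = flipBit x0 j i := congrFun hij i
    rw [hflip_apply, hflip_apply] at this
    simp at this
    omega
  have hScard : S.ncard = n - 1 := by
    rw [hSdef, Set.ncard_image_of_injective _ hflip_inj]
    have : ({i : Fin n | i ≠ j0} : Set (Fin n)) = ↑(Finset.univ.erase j0) := by
      ext i
      simp [Finset.mem_erase]
    rw [this, Set.ncard_coe_finset, Finset.card_erase_of_mem (Finset.mem_univ _)]
    simp
  have hx0S : x0 ∉ S := by
    rintro ⟨i, _, hcon⟩
    have this : flipBit x0 i i = x0 i := congrFun hcon i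
    rw [hflip_apply] at this
    simp [hx0] at this
  have hy0S : y0 ∉ S := by
    rintro ⟨i, hi, hcon⟩
    -- flipBit x0 i = y0 means exactly one coordinate of y0 is true; but y0 has n-1 ≥ 2
    obtain ⟨j, hj1, hj2⟩ : ∃ j : Fin n, j ≠ i ∧ j ≠ j0 := by
      by_contra hcon2
      push_neg at hcon2
      have hall : ∀ j : Fin n, j = i ∨ j = j0 := by
        intro j
        rcases eq_or_ne j i with h | h
        · exact Or.inl h
        · exact Or.inr (hcon2 j h)
      have hcard : (Finset.univ : Finset (Fin n)).card ≤ ({i, j0} : Finset (Fin n)).card := by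
        apply Finset.card_le_card
        intro j _
        rcases hall j with rfl | rfl <;> simp
      have h2 : ({i, j0} : Finset (Fin n)).card ≤ 2 := Finset.card_insert_le _ _ |>.trans (by simp)
      simp only [Finset.card_univ, Fintype.card_fin] at hcard
      omega
    have this : flipBit x0 i j = y0 j := congrFun hcon j
    rw [hflip_apply] at this
    simp [hy0, hj1, hj2] at this
  have hdiam := hmain S (le_of_eq hScard)
  refine ⟨S, hScard, hdiam.1, hdiam.2, ?_⟩
  have hx0c : x0 ∈ Sᶜ := hx0S
  have hy0c : y0 ∈ Sᶜ := hy0S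
  refine ⟨⟨x0, hx0c⟩, ⟨y0, hy0c⟩, ?_⟩
  have hub := hdiam.2 ⟨x0, hx0c⟩ ⟨y0, hy0c⟩
  -- lower bound on every walk length
  have hlb : ∀ (a b : ↥(Sᶜ)) (w : ((Q n).induce Sᶜ).Walk a b),
      a.1 = x0 → b.1 = y0 → n + 1 ≤ w.length := by
    intro a b w
    induction w with
    | nil =>
      intro h1 h2
      exfalso
      rw [h1] at h2
      have := congrFun h2 ⟨0, by omega⟩
      have hne : (⟨0, by omega⟩ : Fin n) ≠ j0 := by
        rw [hj0]
        intro hcon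
        have := congrArg Fin.val hcon
        simp at this
        omega
      simp [hx0, hy0, hne] at this
    | @cons u v b hadj p ih =>
      intro h1 h2
      have hQ : (Q n).Adj u.1 v.1 := hadj
      rw [h1] at hQ
      obtain ⟨i, hvi⟩ := FD.exists_flipBit_of_adj hQ
      have hij0 : i = j0 := by
        by_contra hcon
        apply v.2
        rw [hvi]
        exact ⟨i, hcon, rfl⟩
      have hham : hammingDist v.1 b.1 = n := by
        rw [h2, hvi, hij0]
        rw [hammingDist]
        have hfil : ∀ j ∈ (Finset.univ : Finset (Fin n)), flipBit x0 j0 j ≠ y0 j := by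
          intro j _
          rw [hflip_apply]
          rcases eq_or_ne j j0 with rfl | h
          · simp [hy0]
          · simp [hy0, h]
        rw [Finset.filter_true_of_mem hfil, Finset.card_univ, Fintype.card_fin]
      have := FD.hammingDist_le_walk_length S p
      rw [hham] at this
      simp only [SimpleGraph.Walk.length_cons]
      omega
  have hreach : ((Q n).induce Sᶜ).Reachable ⟨x0, hx0c⟩ ⟨y0, hy0c⟩ :=
    hdiam.1.preconnected _ _
  obtain ⟨w, hw⟩ := hreach.exists_walk_length_eq_dist
  have := hlb _ _ w rfl rfl
  omega
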